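/- arXiv:0906.1553 — 4 statements merged into one kernel-verified Lean document; each statement's English description precedes it below -/
import Mathlib

section
/- For every nonnegative integer n, the renormalized Charlier polynomial C_n(a,r) equals the sum over all Charlier configurations Phi = ((A, sigma), B) on {1,...,n} of a^(number of cycles of sigma) * r^(|B|), where (A,B) ranges over ordered partitions of {1,...,n} and sigma over permutations of A. -/
open Finset

/-- Rising factorial `(a)_k`. -/
noncomputable def rf {R : Type*} [CommRing R] (a : R) (k : ℕ) : R :=
  (ascPochhammer R k).eval a

/-- Renormalized Charlier polynomial. -/
noncomputable def Ch {R : Type*} [CommRing R] (a r : R) (n : ℕ) : R :=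
  ∑ k ∈ Finset.range (n + 1), (n.choose k : R) * rf a k * r ^ (n - k)

/-- Number of cycles of a permutation, counting fixed points as cycles. -/
def cyc {α : Type*} [Fintype α] [DecidableEq α] (π : Equiv.Perm α) : ℕ :=
  π.cycleType.card + (Finset.univ.filter fun i => π i = i).card

section Aux
open Equiv

variable {β : Type*} [Fintype β] [DecidableEq β] {α : Type*} [Fintype α] [DecidableEq α]

lemma cyc_eq (π : Equiv.Perm β) :
    cyc π = π.cycleType.card + (Fintype.card β - π.support.card) := by
  unfold cyc
  congr 1
  have : (Finset.univ.filter fun i => π i = i) = π.supportᶜ := by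
    ext x; simp [Equiv.Perm.mem_support]
  rw [this, Finset.card_compl]

lemma permCongr_eq_extendDomain (e : α ≃ β) (σ : Equiv.Perm α) :
    e.permCongr σ = σ.extendDomain (e.trans (Equiv.subtypeUnivEquiv (fun _ : β => trivial)).symm) := by
  ext b
  rw [Equiv.Perm.extendDomain_apply_subtype _ _ (trivial : (fun _ : β => True) b)]
  simp [Equiv.subtypeUnivEquiv]

lemma cyc_permCongr (e : α ≃ β) (σ : Equiv.Perm α) : cyc (e.permCongr σ) = cyc σ := by
  rw [cyc_eq, cyc_eq, permCongr_eq_extendDomain e σ,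
    Equiv.Perm.cycleType_extendDomain, Equiv.Perm.card_support_extend_domain,
    Fintype.card_congr e]

omit [Fintype β] in
lemma apply_ne_of_ne {c : Equiv.Perm β} {z : β} (hz : c z = z) {w : β} (hw : w ≠ z) : c w ≠ z := by
  intro h; exact hw (c.injective (h.trans hz.symm))

omit [Fintype β] in
lemma pow_apply_fix {c : Equiv.Perm β} {z : β} (hz : c z = z) (m : ℕ) : (c ^ m) z = z := by
  induction m with
  | zero => rfl
  | succ m ih => rw [pow_succ', Equiv.Perm.mul_apply, ih, hz]

lemma support_ins {c : Equiv.Perm β} {z y : β} (hz : c z = z) (hy : c y ≠ y)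
    (hzy : y ≠ z) : (Equiv.swap z y * c).support = insert z c.support := by
  ext w
  simp only [Equiv.Perm.mem_support, Finset.mem_insert, Equiv.Perm.mul_apply]
  by_cases hwz : w = z
  · subst hwz
    rw [hz, Equiv.swap_apply_left]
    simp [hzy]
  · simp only [hwz, false_or]
    by_cases hcw : c w = w
    · have hwy : w ≠ y := fun h => hy (h ▸ hcw)
      rw [hcw, Equiv.swap_apply_of_ne_of_ne hwz hwy]
    · simp only [hcw, iff_true, not_false_iff, Ne]
      by_cases hcwy : c w = y
      · rw [hcwy, Equiv.swap_apply_right]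
        exact fun h => hwz h.symm
      · rw [Equiv.swap_apply_of_ne_of_ne (apply_ne_of_ne hz hwz) hcwy]
        exact hcw

lemma isCycle_ins {c : Equiv.Perm β} (hc : c.IsCycle) {z y : β} (hz : c z = z) (hy : c y ≠ y)
    (hzy : y ≠ z) : (Equiv.swap z y * c).IsCycle := by
  set d := Equiv.swap z y * c with hd
  have hdz : d z = y := by simp [hd, hz]
  have claimA : ∀ j : ℕ, ∃ k : ℕ, (d ^ k) z = (c ^ j) y := by
    intro j
    induction j with
    | zero => exact ⟨1, by simpa using hdz⟩
    | succ j ih =>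
      obtain ⟨k, hk⟩ := ih
      by_cases h : (c ^ (j + 1)) y = y
      · exact ⟨1, by simpa [hdz] using h.symm⟩
      · refine ⟨k + 1, ?_⟩
        have hne : (c ^ (j + 1)) y ≠ z := by
          intro hh
          exact hzy ((c ^ (j + 1)).injective (hh.trans (pow_apply_fix hz (j + 1)).symm))
        calc (d ^ (k + 1)) z = d ((d ^ k) z) := by rw [pow_succ', Equiv.Perm.mul_apply]
          _ = Equiv.swap z y ((c ^ (j + 1)) y) := by
              rw [hk, hd, Equiv.Perm.mul_apply, ← Equiv.Perm.mul_apply c, ← pow_succ']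
          _ = (c ^ (j + 1)) y := Equiv.swap_apply_of_ne_of_ne hne h
  refine ⟨z, by rw [hdz]; exact hzy, fun w hw => ?_⟩
  by_cases hwz : w = z
  · exact hwz ▸ Equiv.Perm.SameCycle.refl d z
  · have hcw : c w ≠ w := by
      have hmem : w ∈ d.support := Equiv.Perm.mem_support.2 hw
      rw [hd, support_ins hz hy hzy, Finset.mem_insert] at hmem
      rcases hmem with h | h
      · exact absurd h hwz
      · exact Equiv.Perm.mem_support.1 h
    have hsc : c.SameCycle y w := hc.sameCycle hy hcw
    obtain ⟨j, -, hj⟩ := hsc.exists_pow_eq'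
    obtain ⟨k, hk⟩ := claimA j
    exact ⟨(k : ℤ), by rw [zpow_natCast, hk, hj]⟩

lemma cyc_swap_mul {f : Equiv.Perm β} {z y : β} (hz : f z = z) (hy : y ≠ z) :
    cyc (Equiv.swap z y * f) + 1 = cyc f := by
  have hzs : z ∉ f.support := Equiv.Perm.notMem_support.2 hz
  by_cases hfy : f y = y
  · -- swap and f are disjoint
    have hys : y ∉ f.support := Equiv.Perm.notMem_support.2 hfy
    have hdisj : Equiv.Perm.Disjoint (Equiv.swap z y) f := by
      intro w
      by_cases hwz : w = z
      · right; rw [hwz, hz]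
      by_cases hwy : w = y
      · right; rw [hwy, hfy]
      · left; exact Equiv.swap_apply_of_ne_of_ne hwz hwy
    have hct : (Equiv.swap z y * f).cycleType = (Equiv.swap z y).cycleType + f.cycleType :=
      hdisj.cycleType_mul
    have hsw : (Equiv.swap z y).cycleType = {2} := by
      rw [(Equiv.Perm.isCycle_swap hy.symm).cycleType, Equiv.Perm.card_support_swap hy.symm]
    have hsupp : (Equiv.swap z y * f).support = (Equiv.swap z y).support ∪ f.support :=
      hdisj.support_mul
    have hsws : (Equiv.swap z y).support = {z, y} := Equiv.Perm.support_swap hy.symm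
    have hcard : (Equiv.swap z y * f).support.card = 2 + f.support.card := by
      rw [hsupp, hsws, Finset.card_union_of_disjoint (by
        simp only [Finset.disjoint_left, Finset.mem_insert, Finset.mem_singleton]
        rintro w (rfl | rfl) <;> simp [Equiv.Perm.mem_support, hz, hfy])]
      congr 1
      rw [Finset.card_insert_of_notMem (by simp [hy.symm]), Finset.card_singleton]
    have hle : 2 + f.support.card ≤ Fintype.card β := by
      rw [← hcard]; exact (Finset.card_le_card (Finset.subset_univ _)).trans_eq (Finset.card_univ)
    rw [cyc_eq, cyc_eq, hct, hsw, hcard, Multiset.card_add, Multiset.card_singleton]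
    omega
  · -- general case: y in a nontrivial cycle of f
    set c := f.cycleOf y with hcdef
    have hmem : c ∈ f.cycleFactorsFinset :=
      Equiv.Perm.cycleOf_mem_cycleFactorsFinset_iff.2 (Equiv.Perm.mem_support.2 hfy)
    have hcyc : c.IsCycle := Equiv.Perm.isCycle_cycleOf f hfy
    have hsuppc : c.support ⊆ f.support := Equiv.Perm.support_cycleOf_le f y
    have hcz : c z = z := Equiv.Perm.notMem_support.1 (fun h => hzs (hsuppc h))
    have hcy : c y ≠ y := by rw [hcdef, Equiv.Perm.cycleOf_apply_self]; exact hfy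
    set g := f * c⁻¹ with hgdef
    have hdisj : Equiv.Perm.Disjoint g c :=
      Equiv.Perm.disjoint_mul_inv_of_mem_cycleFactorsFinset hmem
    have hf : g * c = f := inv_mul_cancel_right f c
    have hsupp : g.support ∪ c.support = f.support := by
      rw [← hdisj.support_mul, hf]
    have hgz : g z = z := Equiv.Perm.notMem_support.1 (fun h => hzs (hsupp ▸ Finset.mem_union_left _ h))
    have hgy : g y = y := by
      have := hdisj.disjoint_support
      have hyc : y ∈ c.support := Equiv.Perm.mem_support.2 hcy
      exact Equiv.Perm.notMem_support.1 (fun h => (Finset.disjoint_left.1 this) h hyc)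
    have hcomm : Equiv.swap z y * g = g * Equiv.swap z y := by
      have : Equiv.Perm.Disjoint (Equiv.swap z y) g := by
        intro w
        by_cases hwz : w = z
        · right; rw [hwz, hgz]
        by_cases hwy : w = y
        · right; rw [hwy, hgy]
        · left; exact Equiv.swap_apply_of_ne_of_ne hwz hwy
      exact this.commute
    set d := Equiv.swap z y * c with hddef
    have hdc : d.IsCycle := isCycle_ins hcyc hcz hcy hy
    have hds : d.support = insert z c.support := support_ins hcz hcy hy
    have heq : Equiv.swap z y * f = g * d := by
      rw [← hf, ← mul_assoc, hcomm, mul_assoc, hddef]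
    have hdgdisj : Equiv.Perm.Disjoint g d := by
      intro w
      by_cases hdw : d w = w
      · right; exact hdw
      · left
        have : w ∈ d.support := Equiv.Perm.mem_support.2 hdw
        rw [hds, Finset.mem_insert] at this
        rcases this with h | h
        · rw [h, hgz]
        · exact Equiv.Perm.notMem_support.1
            (fun hh => (Finset.disjoint_left.1 hdisj.disjoint_support) hh h)
    have hctf : f.cycleType = g.cycleType + c.cycleType := by rw [← hf, hdisj.cycleType_mul]
    have hctd : (Equiv.swap z y * f).cycleType = g.cycleType + d.cycleType := by
      rw [heq, hdgdisj.cycleType_mul]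
    have hcards : (Equiv.swap z y * f).support = insert z f.support := by
      rw [heq, hdgdisj.support_mul, hds, Finset.union_insert, hsupp]
    have hzf : z ∉ f.support := hzs
    have hle : f.support.card + 1 ≤ Fintype.card β := by
      have := Finset.card_le_card (Finset.subset_univ (insert z f.support))
      rwa [Finset.card_insert_of_notMem hzf, Finset.card_univ] at this
    rw [cyc_eq, cyc_eq, hctf, hctd, hcards, Finset.card_insert_of_notMem hzf,
      Multiset.card_add, Multiset.card_add, hdc.cycleType, hcyc.cycleType]
    simp only [Multiset.card_singleton]
    omega

lemma optionCongr_eq_extendDomain (e : Equiv.Perm α) :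
    e.optionCongr = e.extendDomain (Equiv.optionIsSomeEquiv α).symm := by
  refine Equiv.Perm.ext fun x => ?_
  cases x with
  | none =>
      rw [Equiv.Perm.extendDomain_apply_not_subtype]
      · rfl
      · simp
  | some a =>
      calc (optionCongr e) (some a) = some (e a) := rfl
        _ = ((Equiv.optionIsSomeEquiv α).symm (e a) : Option α) := rfl
        _ = e.extendDomain (Equiv.optionIsSomeEquiv α).symm
              ((Equiv.optionIsSomeEquiv α).symm a : Option α) :=
            (Equiv.Perm.extendDomain_apply_image e _ a).symm
        _ = e.extendDomain (Equiv.optionIsSomeEquiv α).symm (some a) := rfl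

lemma cyc_optionCongr (e : Equiv.Perm α) : cyc e.optionCongr = cyc e + 1 := by
  rw [cyc_eq, cyc_eq, optionCongr_eq_extendDomain,
    Equiv.Perm.cycleType_extendDomain, Equiv.Perm.card_support_extend_domain,
    Fintype.card_option]
  have := Finset.card_le_card (Finset.subset_univ e.support)
  rw [Finset.card_univ] at this
  omega

lemma rf_succ {R : Type*} [CommRing R] (a : R) (n : ℕ) :
    rf a (n + 1) = rf a n * (a + n) := by
  unfold rf
  rw [ascPochhammer_succ_right, Polynomial.eval_mul, Polynomial.eval_add, Polynomial.eval_X]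
  simp

lemma sum_cyc {R : Type*} [CommRing R] (a : R) :
    ∀ (n : ℕ) (γ : Type) [Fintype γ] [DecidableEq γ], Fintype.card γ = n →
      ∑ σ : Equiv.Perm γ, a ^ cyc σ = rf a n := by
  intro n
  induction n with
  | zero =>
    intro γ _ _ h
    haveI := Fintype.card_eq_zero_iff.1 h
    rw [Fintype.sum_subsingleton _ (1 : Equiv.Perm γ)]
    have h1 : cyc (1 : Equiv.Perm γ) = 0 := by
      rw [cyc_eq, Equiv.Perm.cycleType_one, Equiv.Perm.support_one]
      simp
    rw [h1, pow_zero]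
    unfold rf
    simp
  | succ n ih =>
    intro γ _ _ h
    have e : γ ≃ Option (Fin n) := Fintype.equivOfCardEq (by simp [h])
    have step1 : ∑ σ : Equiv.Perm γ, a ^ cyc σ =
        ∑ τ : Equiv.Perm (Option (Fin n)), a ^ cyc τ :=
      Fintype.sum_equiv e.permCongr _ _ (fun σ => by rw [cyc_permCongr])
    have step2 : ∑ τ : Equiv.Perm (Option (Fin n)), a ^ cyc τ =
        ∑ pe : Option (Fin n) × Equiv.Perm (Fin n),
          a ^ cyc (Equiv.Perm.decomposeOption.symm pe) :=
      Fintype.sum_equiv Equiv.Perm.decomposeOption _ _ (fun τ => by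
        rw [Equiv.symm_apply_apply])
    have hnone : ∀ e' : Equiv.Perm (Fin n),
        Equiv.Perm.decomposeOption.symm (none, e') = e'.optionCongr := by
      intro e'
      ext x
      simp [Equiv.Perm.decomposeOption, Equiv.swap_self]
    have hS : ∑ e' : Equiv.Perm (Fin n), a ^ cyc e' = rf a n :=
      ih (Fin n) (by simp)
    rw [step1, step2, Fintype.sum_prod_type, Fintype.sum_option]
    have h1 : ∑ e' : Equiv.Perm (Fin n),
        a ^ cyc (Equiv.Perm.decomposeOption.symm (none, e')) =
        a * rf a n := by
      rw [← hS, Finset.mul_sum]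
      refine Finset.sum_congr rfl fun e' _ => ?_
      rw [hnone, cyc_optionCongr, pow_succ]
      ring
    have h2 : ∀ x : Fin n, ∑ e' : Equiv.Perm (Fin n),
        a ^ cyc (Equiv.Perm.decomposeOption.symm (some x, e')) = rf a n := by
      intro x
      rw [← hS]
      refine Finset.sum_congr rfl fun e' _ => ?_
      congr 1
      have hd : Equiv.Perm.decomposeOption.symm (some x, e') =
          Equiv.swap none (some x) * e'.optionCongr := rfl
      have hfix : e'.optionCongr none = none := rfl
      have := cyc_swap_mul (f := e'.optionCongr) (z := none) (y := some x)
        hfix (by simp)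
      rw [hd]
      have hoc := cyc_optionCongr e'
      omega
    rw [h1, Finset.sum_congr rfl (fun x _ => h2 x), Finset.sum_const, Finset.card_univ]
    simp only [Fintype.card_fin, nsmul_eq_mul]
    rw [rf_succ]
    ring

end Aux

/-- `C_n(a,r)` is the sum of the weights `a^(cyc σ) r^|B|` over all Charlier
configurations `((A,σ),B)` on `{1,…,n}`: an ordered partition `(A,B)` of the set
together with a permutation `σ` of `A` (here `A` is the complement of `B`). -/
theorem stmt2 {R : Type*} [CommRing R] (n : ℕ) (a r : R) :
    Ch a r n =
      ∑ B : Finset (Fin n), ∑ σ : Equiv.Perm {x : Fin n // x ∉ B},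
        a ^ cyc σ * r ^ B.card := by
  have inner : ∀ B : Finset (Fin n),
      ∑ σ : Equiv.Perm {x : Fin n // x ∉ B}, a ^ cyc σ * r ^ B.card
        = rf a (n - B.card) * r ^ B.card := by
    intro B
    rw [← Finset.sum_mul]
    congr 1
    refine sum_cyc a (n - B.card) _ ?_
    have : Fintype.card {x : Fin n // x ∉ B} = Fintype.card (Fin n) - B.card := by
      rw [Fintype.card_subtype_compl, Fintype.card_coe]
    simpa using this
  rw [Finset.sum_congr rfl (fun B _ => inner B)]
  -- group subsets by cardinality
  have grouped : ∑ B : Finset (Fin n), rf a (n - B.card) * r ^ B.card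
      = ∑ j ∈ Finset.range (n + 1), (n.choose j : R) * rf a (n - j) * r ^ j := by
    rw [← Finset.powerset_univ, Finset.sum_powerset]
    simp only [Finset.card_univ, Fintype.card_fin]
    refine Finset.sum_congr rfl fun j hj => ?_
    have : ∀ B ∈ Finset.powersetCard j (Finset.univ : Finset (Fin n)),
        rf a (n - B.card) * r ^ B.card = rf a (n - j) * r ^ j := by
      intro B hB
      rw [(Finset.mem_powersetCard.1 hB).2]
    rw [Finset.sum_congr rfl this, Finset.sum_const, Finset.card_powersetCard,
      Finset.card_univ, Fintype.card_fin, nsmul_eq_mul]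
    ring
  rw [grouped]
  unfold Ch
  rw [← Finset.sum_range_reflect]
  refine Finset.sum_congr rfl fun j hj => ?_
  have hjn : j ≤ n := Nat.lt_succ_iff.1 (Finset.mem_range.1 hj)
  simp only [Nat.add_sub_cancel]
  rw [Nat.choose_symm hjn, Nat.sub_sub_self hjn]
end

section
/- Bilinear generating function for Charlier polynomials: as formal power series in x, sum_{n>=0} C_n(a,r) * C_n(b,s) * x^n / n! = e^(r*s*x) * sum_{n>=0} (a)_n * (b)_n * x^n / (n! * (1-s*x)^(n+a) * (1-r*x)^(n+b)). -/
open Finset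

/-- The formal power series `(1 - w x)^{-u} = ∑_m (u)_m w^m x^m / m!`. -/
noncomputable def binS {R : Type*} [CommRing R] [Algebra ℚ R] (u w : R) :
    PowerSeries R :=
  PowerSeries.mk fun m => (m.factorial : ℚ)⁻¹ • (rf u m * w ^ m)

section aux
variable {R : Type*} [CommRing R] [Algebra ℚ R]

omit [Algebra ℚ R] in
lemma rf_add (a : R) (n m : ℕ) : rf a (n + m) = rf a n * rf (a + n) m := by
  simp only [rf, ← ascPochhammer_mul]
  simp [Polynomial.eval_comp, add_comm]

lemma natCast_mul_eq_smul (m : ℕ) (x : R) : (m : R) * x = (m : ℚ) • x := by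
  rw [Algebra.smul_def, map_natCast]

lemma quad_eq (M k n n' : ℕ) (hk : k ≤ M) (hn : n ≤ k) (hn' : k + n' ≤ M) :
    (M.factorial : ℚ)⁻¹ * (M.choose k) * (k.choose n) * ((M - k).choose n')
      = ((n.factorial : ℚ) * (k - n).factorial * ((n'.factorial : ℚ) * (M - (k + n')).factorial))⁻¹ := by
  have hn'' : n' ≤ M - k := by omega
  have e : M - (k + n') = M - k - n' := by omega
  rw [e, Nat.cast_choose ℚ hk, Nat.cast_choose ℚ hn, Nat.cast_choose ℚ hn'']
  have h1 : ((M.factorial : ℚ)) ≠ 0 := by exact_mod_cast M.factorial_ne_zero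
  have h2 : ((k.factorial : ℚ)) ≠ 0 := by exact_mod_cast k.factorial_ne_zero
  have h3 : (((M - k).factorial : ℚ)) ≠ 0 := by exact_mod_cast (M - k).factorial_ne_zero
  have h4 : ((n.factorial : ℚ)) ≠ 0 := by exact_mod_cast n.factorial_ne_zero
  have h5 : (((k - n).factorial : ℚ)) ≠ 0 := by exact_mod_cast (k - n).factorial_ne_zero
  have h6 : ((n'.factorial : ℚ)) ≠ 0 := by exact_mod_cast n'.factorial_ne_zero
  have h7 : (((M - k - n').factorial : ℚ)) ≠ 0 := by exact_mod_cast (M - k - n').factorial_ne_zero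
  field_simp

/-- canonical summand -/
noncomputable def Phi (a b r s : R) (n i j t : ℕ) : R :=
  ((n.factorial : ℚ) * (i.factorial : ℚ) * ((j.factorial : ℚ) * (t.factorial : ℚ)))⁻¹ •
    (rf a (n + i) * rf b (n + j) * (s ^ (i + t) * r ^ (j + t)))

lemma rhs_term (a b r s : R) (n i j t : ℕ) :
    ((t.factorial : ℚ)⁻¹ • (r * s) ^ t) *
      (((n.factorial : ℚ)⁻¹ • (rf a n * rf b n)) *
        ((((i.factorial : ℚ)⁻¹ • (rf (a + (n : R)) i * s ^ i))) *
          ((j.factorial : ℚ)⁻¹ • (rf (b + (n : R)) j * r ^ j)))) = Phi a b r s n i j t := by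
  rw [Phi, rf_add a (n : ℕ) i, rf_add b n j, pow_add, pow_add, mul_pow]
  simp only [smul_mul_assoc, mul_smul_comm, smul_smul]
  congr 1
  · field_simp
  · ring

lemma lhs_term (a b r s : R) (M k l : ℕ) (hk : k ≤ M) :
    (M.factorial : ℚ)⁻¹ • ((M.choose k : R) * rf a k * r ^ (M - k) *
        ((M.choose l : R) * rf b l * s ^ (M - l)))
      = ∑ q ∈ antidiagonal l,
          ((M.factorial : ℚ)⁻¹ * (M.choose k) * (k.choose q.1) * ((M - k).choose q.2)) •
            (rf a k * rf b l * (s ^ (M - l) * r ^ (M - k))) := by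
  have hV : (M.choose l : R) = ∑ q ∈ antidiagonal l, (k.choose q.1 : R) * ((M - k).choose q.2) := by
    have h := Nat.add_choose_eq k (M - k) l
    rw [Nat.add_sub_cancel' hk] at h
    exact_mod_cast congrArg (fun z : ℕ => (z : R)) h
  rw [hV, Finset.sum_mul, Finset.sum_mul, Finset.mul_sum, Finset.smul_sum]
  refine Finset.sum_congr rfl fun q _ => ?_
  have hring : (M.choose k : R) * rf a k * r ^ (M - k) *
      ((k.choose q.1 : R) * ((M - k).choose q.2) * rf b l * s ^ (M - l))
      = (M.choose k : R) * ((k.choose q.1 : R) * (((M - k).choose q.2 : R) *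
          (rf a k * rf b l * (s ^ (M - l) * r ^ (M - k))))) := by ring
  rw [hring, natCast_mul_eq_smul, natCast_mul_eq_smul, natCast_mul_eq_smul,
    smul_smul, smul_smul, smul_smul]

end aux

/-- Bilinear generating function for Charlier polynomials:
`∑ C_n(a,r) C_n(b,s) x^n/n! = e^{rsx} ∑_n (a)_n (b)_n x^n /(n! (1-sx)^{n+a} (1-rx)^{n+b})`.
The inner sum has an explicit factor `x^n`, which is reflected by taking the
coefficient of `x^{N-n}` of `(1-sx)^{-(n+a)} (1-rx)^{-(n+b)}`. -/
theorem stmt5 {R : Type*} [CommRing R] [Algebra ℚ R] (a b r s : R) :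
    PowerSeries.mk (fun n => (n.factorial : ℚ)⁻¹ • (Ch a r n * Ch b s n)) =
      PowerSeries.mk (fun t => (t.factorial : ℚ)⁻¹ • (r * s) ^ t) *
        PowerSeries.mk (fun N => ∑ n ∈ Finset.range (N + 1),
          ((n.factorial : ℚ)⁻¹ • (rf a n * rf b n)) *
            PowerSeries.coeff (R := R) (N - n)
              (binS (a + (n : R)) s * binS (b + (n : R)) r)) := by
  classical
  ext M
  rw [PowerSeries.coeff_mul]
  simp only [PowerSeries.coeff_mk]
  -- RHS to canonical form
  have hcoeff : ∀ (n N : ℕ), (PowerSeries.coeff (R := R) (N - n)) (binS (a + (n : R)) s * binS (b + (n : R)) r)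
      = ∑ q ∈ antidiagonal (N - n),
          ((q.1.factorial : ℚ)⁻¹ • (rf (a + (n : R)) q.1 * s ^ q.1)) *
          ((q.2.factorial : ℚ)⁻¹ • (rf (b + (n : R)) q.2 * r ^ q.2)) := by
    intro n N
    rw [binS, binS, PowerSeries.coeff_mul]
    simp only [PowerSeries.coeff_mk]
  have hR : (∑ p ∈ antidiagonal M, ((p.1.factorial : ℚ)⁻¹ • (r * s) ^ p.1) *
        ∑ n ∈ range (p.2 + 1), ((n.factorial : ℚ)⁻¹ • (rf a n * rf b n)) *
          PowerSeries.coeff (R := R) (p.2 - n) (binS (a + (n : R)) s * binS (b + (n : R)) r))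
      = ∑ x ∈ (antidiagonal M).sigma
          (fun p => (range (p.2 + 1)).sigma (fun n => antidiagonal (p.2 - n))),
          Phi a b r s x.2.1 x.2.2.1 x.2.2.2 x.1.1 := by
    rw [Finset.sum_sigma]
    refine Finset.sum_congr rfl fun p _ => ?_
    rw [Finset.sum_sigma, Finset.mul_sum]
    refine Finset.sum_congr rfl fun n _ => ?_
    rw [hcoeff, Finset.mul_sum, Finset.mul_sum]
    refine Finset.sum_congr rfl fun q _ => ?_
    exact rhs_term a b r s n q.1 q.2 p.1
  rw [hR]
  -- LHS to sum over filtered sigma set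
  have hL : (M.factorial : ℚ)⁻¹ • (Ch a r M * Ch b s M)
      = ∑ x ∈ (((range (M + 1)) ×ˢ (range (M + 1))).sigma (fun p => antidiagonal p.2)).filter
          (fun x => x.2.1 ≤ x.1.1 ∧ x.1.1 + x.2.2 ≤ M),
          ((M.factorial : ℚ)⁻¹ * (M.choose x.1.1) * (x.1.1.choose x.2.1) *
              ((M - x.1.1).choose x.2.2)) •
            (rf a x.1.1 * rf b x.1.2 * (s ^ (M - x.1.2) * r ^ (M - x.1.1))) := by
    rw [Finset.sum_filter_of_ne, Finset.sum_sigma]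
    · rw [Finset.sum_product]
      rw [Ch, Ch, Finset.sum_mul_sum, Finset.smul_sum]
      refine Finset.sum_congr rfl fun k hk => ?_
      rw [Finset.smul_sum]
      refine Finset.sum_congr rfl fun l _ => ?_
      exact lhs_term a b r s M k l (by simpa [Nat.lt_succ_iff] using hk)
    · rintro ⟨⟨k, l⟩, n, n'⟩ hx hne
      simp only [Finset.mem_sigma, Finset.mem_product, Finset.mem_range,
        Finset.mem_antidiagonal, Nat.lt_succ_iff, and_true, true_and] at hx
      obtain ⟨⟨hk, hl⟩, hnl⟩ := hx
      by_contra hP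
      apply hne
      dsimp only at hP ⊢
      push_neg at hP
      rcases le_or_gt n k with hn | hn
      · have h2 : M - k < n' := by
          have := hP hn
          omega
        rw [Nat.choose_eq_zero_of_lt h2]
        simp
      · rw [Nat.choose_eq_zero_of_lt hn]
        simp
  rw [hL]
  -- the bijection
  refine Finset.sum_nbij'
    (fun x => ⟨(M - (x.1.1 + x.2.2), x.1.1 + x.2.2), x.2.1, (x.1.1 - x.2.1, x.2.2)⟩)
    (fun x => ⟨(x.2.1 + x.2.2.1, x.2.1 + x.2.2.2), (x.2.1, x.2.2.2)⟩) ?_ ?_ ?_ ?_ ?_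
  · rintro ⟨⟨k, l⟩, n, n'⟩ hx
    dsimp only
    simp only [Finset.mem_filter, Finset.mem_sigma, Finset.mem_product, Finset.mem_range,
      Finset.HasAntidiagonal.mem_antidiagonal, Nat.lt_succ_iff, and_true, true_and] at hx ⊢
    omega
  · rintro ⟨⟨t, N⟩, n, i, j⟩ hx
    dsimp only
    simp only [Finset.mem_filter, Finset.mem_sigma, Finset.mem_product, Finset.mem_range,
      Finset.HasAntidiagonal.mem_antidiagonal, Nat.lt_succ_iff, and_true, true_and] at hx ⊢
    omega
  · rintro ⟨⟨k, l⟩, n, n'⟩ hx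
    dsimp only
    simp only [Finset.mem_filter, Finset.mem_sigma, Finset.mem_product, Finset.mem_range,
      Finset.HasAntidiagonal.mem_antidiagonal, Nat.lt_succ_iff, and_true, true_and] at hx
    obtain ⟨⟨⟨hk, hl⟩, hnl⟩, hnk, hkM⟩ := hx
    rw [show n + (k - n) = k by omega, show n + n' = l by omega]
  · rintro ⟨⟨t, N⟩, n, i, j⟩ hx
    dsimp only
    simp only [Finset.mem_sigma, Finset.mem_range, Finset.HasAntidiagonal.mem_antidiagonal,
      Nat.lt_succ_iff] at hx
    rw [show n + i + j = N by omega, show M - N = t by omega, show n + i - n = i by omega]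
  · rintro ⟨⟨k, l⟩, n, n'⟩ hx
    dsimp only
    simp only [Finset.mem_filter, Finset.mem_sigma, Finset.mem_product, Finset.mem_range,
      Finset.HasAntidiagonal.mem_antidiagonal, Nat.lt_succ_iff, and_true, true_and] at hx
    obtain ⟨⟨⟨hk, hl⟩, hnl⟩, hnk, hkM⟩ := hx
    rw [Phi]
    have e1 : n + (k - n) = k := by omega
    have e2 : n + n' = l := by omega
    have e3 : (k - n) + (M - (k + n')) = M - l := by omega
    have e4 : n' + (M - (k + n')) = M - k := by omega
    rw [e1, e2, e3, e4, quad_eq M k n n' (by omega) hnk hkM]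
end

section
/- For each permutation pi of {1,...,n}, the number of Charlier configurations ((A,sigma),B) on {1,...,n} whose associated permutation equals pi (where the associated permutation agrees with sigma on A and fixes every point of B) is 2^(fix(pi)), where fix(pi) is the number of fixed points of pi. Consequently, sum over all Charlier configurations on [n] of a^(cyc(sigma)) r^(|B|) equals sum_{pi in S_n} a^(cyc>1(pi)) (a+r)^(fix(pi)). -/
open Finset

/-- Number of fixed points of a permutation. -/
def fixc {α : Type*} [Fintype α] [DecidableEq α] (π : Equiv.Perm α) : ℕ :=
  (Finset.univ.filter fun i => π i = i).card

/-- The permutation of `Fin n` associated to the Charlier configuration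
`((A,σ),B)`: it agrees with `σ` on `A` (the complement of `B`) and fixes every
point of `B`. -/
def assoc {n : ℕ} (B : Finset (Fin n)) (σ : Equiv.Perm {x : Fin n // x ∉ B}) :
    Equiv.Perm (Fin n) :=
  σ.extendDomain (Equiv.refl {x : Fin n // x ∉ B})

section Aux

variable {n : ℕ}

/-- The set of fixed points of `π`. -/
def fixSet (π : Equiv.Perm (Fin n)) : Finset (Fin n) :=
  Finset.univ.filter fun i => π i = i

lemma fixc_eq (π : Equiv.Perm (Fin n)) : fixc π = (fixSet π).card := rfl

lemma mem_fixSet {π : Equiv.Perm (Fin n)} {x : Fin n} : x ∈ fixSet π ↔ π x = x := by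
  simp [fixSet]

lemma assoc_apply_mem (B : Finset (Fin n)) (σ : Equiv.Perm {x : Fin n // x ∉ B})
    {x : Fin n} (hx : x ∈ B) : assoc B σ x = x :=
  Equiv.Perm.extendDomain_apply_not_subtype σ _ (by simpa using hx)

lemma assoc_apply_not_mem (B : Finset (Fin n)) (σ : Equiv.Perm {x : Fin n // x ∉ B})
    {x : Fin n} (hx : x ∉ B) : assoc B σ x = (σ ⟨x, hx⟩ : Fin n) := by
  have := Equiv.Perm.extendDomain_apply_subtype σ (Equiv.refl {x : Fin n // x ∉ B}) hx
  simpa [assoc] using this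

lemma hBiff (π : Equiv.Perm (Fin n)) (B : Finset (Fin n)) (hB : B ⊆ fixSet π) :
    ∀ x, x ∉ B ↔ π x ∉ B := by
  intro x
  constructor
  · intro hx hpx
    have h1 : π (π x) = π x := mem_fixSet.mp (hB hpx)
    exact hx (by rwa [π.injective h1] at hpx)
  · intro hpx hx
    have h1 : π x = x := mem_fixSet.mp (hB hx)
    exact hpx (by rwa [h1])

/-- The fiber of `assoc` over `π` is in bijection with subsets of `fixSet π`. -/
def fiberEquiv (π : Equiv.Perm (Fin n)) :
    {cfg : (B : Finset (Fin n)) × Equiv.Perm {x : Fin n // x ∉ B} //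
      assoc cfg.1 cfg.2 = π} ≃ {B : Finset (Fin n) // B ⊆ fixSet π} where
  toFun cfg := ⟨cfg.1.1, fun b hb => mem_fixSet.mpr (by
    rw [← cfg.2]; exact assoc_apply_mem _ _ hb)⟩
  invFun B := ⟨⟨B.1, π.subtypePerm (fun x => (hBiff π B.1 B.2 x).symm)⟩, by
    ext x
    by_cases hx : x ∈ B.1
    · rw [assoc_apply_mem _ _ hx, (mem_fixSet.mp (B.2 hx))]
    · rw [assoc_apply_not_mem _ _ hx]; rfl⟩
  left_inv := by
    rintro ⟨⟨B, σ⟩, h⟩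
    apply Subtype.ext
    apply congrArg (Sigma.mk B)
    ext x
    simp only [Equiv.Perm.subtypePerm_apply]
    subst h
    rw [assoc_apply_not_mem _ _ x.2]
  right_inv := fun B => Subtype.ext rfl

lemma fiber_card (π : Equiv.Perm (Fin n)) :
    Fintype.card {cfg : (B : Finset (Fin n)) × Equiv.Perm {x : Fin n // x ∉ B} //
      assoc cfg.1 cfg.2 = π} = 2 ^ fixc π := by
  rw [Fintype.card_congr (fiberEquiv π),
    Fintype.card_congr (Equiv.subtypeEquivRight
      (p := fun B => B ⊆ fixSet π) (q := fun B => B ∈ (fixSet π).powerset)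
      (fun B => (Finset.mem_powerset).symm)),
    Fintype.card_coe, Finset.card_powerset, fixc_eq]

lemma cyc_subtypePerm (π : Equiv.Perm (Fin n)) (B : Finset (Fin n)) (hB : B ⊆ fixSet π) :
    cyc (π.subtypePerm (p := fun x => x ∉ B) (fun x => (hBiff π B hB x).symm)) =
      π.cycleType.card + ((fixSet π).card - B.card) := by
  set σ := π.subtypePerm (p := fun x => x ∉ B) (fun x => (hBiff π B hB x).symm) with hσ
  have hassoc : assoc B σ = π := ((fiberEquiv π).invFun ⟨B, hB⟩).2
  have hct : σ.cycleType.card = π.cycleType.card := by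
    rw [← hassoc, assoc, Equiv.Perm.cycleType_extendDomain]
  have hfix : (Finset.univ.filter fun x : {x : Fin n // x ∉ B} => σ x = x).card
      = (fixSet π \ B).card := by
    apply Finset.card_bij (fun x _ => x.1)
    · intro x hx
      simp only [Finset.mem_filter, Finset.mem_univ, true_and] at hx
      have : π x.1 = x.1 := by
        have := congrArg Subtype.val hx
        simpa [hσ] using this
      simp [Finset.mem_sdiff, mem_fixSet, this, x.2]
    · intro x _ y _ hxy
      exact Subtype.ext hxy
    · intro y hy
      simp only [Finset.mem_sdiff, mem_fixSet] at hy
      refine ⟨⟨y, hy.2⟩, ?_, rfl⟩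
      simp only [Finset.mem_filter, Finset.mem_univ, true_and]
      exact Subtype.ext (by simpa [hσ] using hy.1)
  rw [cyc, hct, hfix, Finset.card_sdiff_of_subset hB]

lemma binom {R : Type*} [CommRing R] (S : Finset (Fin n)) (a r : R) :
    ∑ B ∈ S.powerset, a ^ (S.card - B.card) * r ^ B.card = (a + r) ^ S.card := by
  calc ∑ B ∈ S.powerset, a ^ (S.card - B.card) * r ^ B.card
      = ∑ B ∈ S.powerset, (∏ _i ∈ B, r) * ∏ _i ∈ S \ B, a := by
        refine Finset.sum_congr rfl fun B hB => ?_
        rw [Finset.prod_const, Finset.prod_const,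
          Finset.card_sdiff_of_subset (Finset.mem_powerset.mp hB), mul_comm]
    _ = ∏ _i ∈ S, (r + a) := (Finset.prod_add _ _ _).symm
    _ = (a + r) ^ S.card := by rw [Finset.prod_const, add_comm]

end Aux

/-- For each `π ∈ S_n`, the number of Charlier configurations on `[n]` whose
associated permutation is `π` equals `2^{fix(π)}`; consequently
`∑_{((A,σ),B)} a^{cyc(σ)} r^{|B|} = ∑_{π ∈ S_n} a^{cyc_{>1}(π)} (a+r)^{fix(π)}`. -/
theorem stmt16 {R : Type*} [CommRing R] (n : ℕ) (a r : R) :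
    (∀ π : Equiv.Perm (Fin n),
      Fintype.card
          {cfg : (B : Finset (Fin n)) × Equiv.Perm {x : Fin n // x ∉ B} //
            assoc cfg.1 cfg.2 = π} = 2 ^ fixc π) ∧
    ∑ B : Finset (Fin n), ∑ σ : Equiv.Perm {x : Fin n // x ∉ B},
        a ^ cyc σ * r ^ B.card =
      ∑ π : Equiv.Perm (Fin n), a ^ π.cycleType.card * (a + r) ^ fixc π := by
  refine ⟨fiber_card, ?_⟩
  calc ∑ B : Finset (Fin n), ∑ σ : Equiv.Perm {x : Fin n // x ∉ B},
        a ^ cyc σ * r ^ B.card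
      = ∑ cfg : (B : Finset (Fin n)) × Equiv.Perm {x : Fin n // x ∉ B},
          a ^ cyc cfg.2 * r ^ cfg.1.card := by
        rw [← Finset.univ_sigma_univ, Finset.sum_sigma]
    _ = ∑ π : Equiv.Perm (Fin n),
          ∑ cfg : {cfg : (B : Finset (Fin n)) × Equiv.Perm {x : Fin n // x ∉ B} //
            assoc cfg.1 cfg.2 = π}, a ^ cyc cfg.1.2 * r ^ cfg.1.1.card :=
        (Fintype.sum_fiberwise _ _).symm
    _ = ∑ π : Equiv.Perm (Fin n), a ^ π.cycleType.card * (a + r) ^ fixc π := by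
        refine Finset.sum_congr rfl fun π _ => ?_
        rw [← Equiv.sum_comp (fiberEquiv π).symm
          (fun cfg => a ^ cyc cfg.1.2 * r ^ cfg.1.1.card)]
        have : ∀ B : {B : Finset (Fin n) // B ⊆ fixSet π},
            a ^ cyc ((fiberEquiv π).symm B).1.2 * r ^ ((fiberEquiv π).symm B).1.1.card
            = a ^ π.cycleType.card *
                (a ^ ((fixSet π).card - B.1.card) * r ^ B.1.card) := by
          intro B
          have : ((fiberEquiv π).symm B).1 = ⟨B.1, π.subtypePerm (fun x => (hBiff π B.1 B.2 x).symm)⟩ := rfl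
          rw [this, cyc_subtypePerm π B.1 B.2, pow_add, mul_assoc]
        rw [Finset.sum_congr rfl (fun B _ => this B), ← Finset.mul_sum]
        congr 1
        rw [fixc_eq, ← binom (fixSet π) a r]
        exact (Finset.sum_subtype ((fixSet π).powerset) (fun B => Finset.mem_powerset)
          (fun B => a ^ ((fixSet π).card - B.card) * r ^ B.card)).symm
end

section
/- Trilinear coefficient identity (simplest nontrivial case of the multilinear formula with k=3): for all nonnegative integers L, M, N, the coefficient of x^L y^M z^N / (L! M! N!) in sum_{l,m,n} C_{l+m}(a,r) C_{l+n}(b,s) C_{m+n}(c,t) x^l y^m z^n/(l! m! n!) equals C_{L+M}(a,r) C_{L+N}(b,s) C_{M+N}(c,t), and this equals the corresponding coefficient of e^(rsx+rty+stz) * sum_{l,m,n} (a)_{l+m}(b)_{l+n}(c)_{m+n} x^l y^m z^n / (l! m! n! (1-sx-ty)^{l+m+a}(1-rx-tz)^{l+n+b}(1-ry-sz)^{m+n+c}), as a polynomial identity in a, b, c, r, s, t. -/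
open Finset


set_option linter.unusedSectionVars false
set_option maxHeartbeats 1600000

lemma rf_rf {R : Type*} [CommRing R] (x : R) (n m : ℕ) :
    rf x n * rf (x + (n : R)) m = rf x (n + m) := by
  unfold rf
  rw [← ascPochhammer_mul, Polynomial.eval_mul, Polynomial.eval_comp]
  simp

lemma natq_smul {R : Type*} [CommRing R] [Algebra ℚ R] (n : ℕ) (v : R) :
    ((n : ℚ)) • v = (n : R) * v := by
  rw [show ((n:ℚ)) = ((n:ℕ):ℚ) from rfl, Nat.cast_smul_eq_nsmul, nsmul_eq_mul]

section helpers
variable {R : Type*} [CommRing R] [Algebra ℚ R]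



lemma tri_repr (n : ℕ) (g : ℕ → ℕ → R) :
    ∑ l ∈ range (n+1), ∑ i ∈ range (n-l+1), g l i
    = ∑ q ∈ (range (n+1) ×ˢ range (n+1)).filter (fun q => q.1 + q.2 ≤ n), g q.1 q.2 := by
  rw [Finset.sum_filter, Finset.sum_product]
  refine Finset.sum_congr rfl fun l hl => ?_
  have hl' : l ≤ n := by simpa [Nat.lt_succ_iff] using hl
  have hr : range (n-l+1) = (range (n+1)).filter (fun i => l + i ≤ n) := by
    ext i; simp [Nat.lt_succ_iff]; omega
  rw [hr, Finset.sum_filter]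

lemma tri_repr2 (n : ℕ) (h : ℕ → ℕ → R) :
    ∑ x ∈ range (n+1), ∑ l ∈ range (x+1), h x l
    = ∑ q ∈ (range (n+1) ×ˢ range (n+1)).filter (fun q => q.2 ≤ q.1), h q.1 q.2 := by
  rw [Finset.sum_filter, Finset.sum_product]
  refine Finset.sum_congr rfl fun x hx => ?_
  have hx' : x ≤ n := by simpa [Nat.lt_succ_iff] using hx
  have hr : range (x+1) = (range (n+1)).filter (fun l => l ≤ x) := by
    ext l; simp [Nat.lt_succ_iff]; omega
  rw [hr, Finset.sum_filter]

lemma tri_comm (n : ℕ) (g : ℕ → ℕ → R) :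
    ∑ l ∈ range (n+1), ∑ i ∈ range (n-l+1), g l i
    = ∑ i ∈ range (n+1), ∑ l ∈ range (n-i+1), g l i := by
  rw [tri_repr n g, tri_repr n (fun i l => g l i)]
  exact Finset.sum_nbij' Prod.swap Prod.swap
    (by intro q hq; simp at hq ⊢; omega)
    (by intro q hq; simp at hq ⊢; omega)
    (by intro q _; simp) (by intro q _; simp) (by intro q _; rfl)

lemma diag (n : ℕ) (g : ℕ → ℕ → R) :
    ∑ l ∈ range (n+1), ∑ i ∈ range (n-l+1), g l i
    = ∑ x ∈ range (n+1), ∑ l ∈ range (x+1), g l (x-l) := by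
  rw [tri_repr n g, tri_repr2 n (fun x l => g l (x-l))]
  exact Finset.sum_nbij' (fun q => (q.1 + q.2, q.1)) (fun q => (q.2, q.1 - q.2))
    (by intro q hq; simp [Prod.ext_iff] at hq ⊢; try omega)
    (by intro q hq; simp [Prod.ext_iff] at hq ⊢; try omega)
    (by intro q hq; simp [Prod.ext_iff] at hq ⊢; try omega)
    (by intro q hq; simp [Prod.ext_iff] at hq ⊢; try omega)
    (by intro q hq; simp [Prod.ext_iff] at hq ⊢; try omega)

lemma tri_reflect (n : ℕ) (F : ℕ → ℕ → R) :
    ∑ p ∈ range (n+1), ∑ i ∈ range (n-p+1), F p i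
    = ∑ i ∈ range (n+1), ∑ j ∈ range (n-i+1), F (n-i-j) i := by
  rw [tri_comm]
  refine Finset.sum_congr rfl fun i hi => ?_
  have := Finset.sum_range_reflect (fun p => F p i) (n-i+1)
  simp only [Nat.add_sub_cancel] at this
  exact this.symm


lemma weight_eq (L x l i2 : ℕ) (hx : x ≤ L) (hl : l ≤ x) (hi : i2 ≤ L - x) :
    ((l.factorial * (L-x-i2).factorial * (x-l).factorial * i2.factorial : ℕ) : ℚ)⁻¹
    = (L.factorial : ℚ)⁻¹ * (L.choose x : ℚ) * ((x.choose l * (L-x).choose i2 : ℕ) : ℚ) := by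
  have h1 : x.choose l * l.factorial * (x-l).factorial = x.factorial :=
    Nat.choose_mul_factorial_mul_factorial hl
  have h2 : (L-x).choose i2 * i2.factorial * (L-x-i2).factorial = (L-x).factorial :=
    Nat.choose_mul_factorial_mul_factorial hi
  have h3 : L.choose x * x.factorial * (L-x).factorial = L.factorial :=
    Nat.choose_mul_factorial_mul_factorial hx
  have key : (L.choose x * (x.choose l * (L-x).choose i2)) *
      (l.factorial * (L-x-i2).factorial * (x-l).factorial * i2.factorial) = L.factorial := by
    rw [← h3, ← h1, ← h2]; ring
  have keyQ : ((L.choose x : ℚ) * ((x.choose l * (L-x).choose i2 : ℕ) : ℚ)) *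
      ((l.factorial * (L-x-i2).factorial * (x-l).factorial * i2.factorial : ℕ) : ℚ)
      = (L.factorial : ℚ) := by exact_mod_cast congrArg (Nat.cast : ℕ → ℚ) key
  have f0 : ∀ k : ℕ, ((k.factorial : ℚ)) ≠ 0 := fun k => Nat.cast_ne_zero.mpr (Nat.factorial_ne_zero k)
  have d0 : ((l.factorial * (L-x-i2).factorial * (x-l).factorial * i2.factorial : ℕ) : ℚ) ≠ 0 := by
    push_cast; positivity
  push_cast at keyQ ⊢
  field_simp
  push_cast
  linear_combination -keyQ


lemma pascal_sum (n : ℕ) (f : ℕ → R) :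
    ∑ k ∈ range (n+1), ((n.choose k : ℕ) : ℚ) • f (k+1)
      + ∑ k ∈ range (n+1), ((n.choose k : ℕ) : ℚ) • f k
    = ∑ k ∈ range (n+2), (((n+1).choose k : ℕ) : ℚ) • f k := by
  rw [Finset.sum_range_succ' (fun k => (((n+1).choose k : ℕ) : ℚ) • f k) (n+1)]
  simp only [Nat.choose_succ_succ, Nat.cast_add, add_smul, Finset.sum_add_distrib,
    Nat.choose_zero_right, Nat.cast_one, one_smul]
  rw [add_assoc]
  congr 1
  have h2 := Finset.sum_range_succ' (fun k => ((n.choose k : ℕ) : ℚ) • f k) (n+1)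
  rw [Finset.sum_range_succ (fun k => ((n.choose k : ℕ) : ℚ) • f k) (n+1),
    Nat.choose_succ_self, Nat.cast_zero, zero_smul, add_zero] at h2
  rw [h2]
  simp

lemma vand (L : ℕ) : ∀ (M : ℕ) (f : ℕ → R),
    ∑ x ∈ range (L+1), ∑ y ∈ range (M+1),
      ((L.choose x * M.choose y : ℕ) : ℚ) • f (x+y)
    = ∑ k ∈ range (L+M+1), (((L+M).choose k : ℕ) : ℚ) • f k := by
  induction L with
  | zero => intro M f; simp
  | succ L ih =>
    intro M f
    rw [Finset.sum_range_succ' (fun x => ∑ y ∈ range (M+1),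
      (((L+1).choose x * M.choose y : ℕ) : ℚ) • f (x+y)) (L+1)]
    have step : ∀ x ∈ range (L+1), (∑ y ∈ range (M+1),
        (((L+1).choose (x+1) * M.choose y : ℕ) : ℚ) • f (x+1+y))
        = (∑ y ∈ range (M+1), ((L.choose x * M.choose y : ℕ) : ℚ) • f ((x+y)+1))
          + ∑ y ∈ range (M+1), ((L.choose (x+1) * M.choose y : ℕ) : ℚ) • f ((x+1)+y) := by
      intro x _
      rw [← Finset.sum_add_distrib]
      refine Finset.sum_congr rfl fun y _ => ?_
      rw [Nat.choose_succ_succ, Nat.add_mul, Nat.cast_add, add_smul,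
        show x+1+y = x+y+1 from by omega]
    rw [Finset.sum_congr rfl step, Finset.sum_add_distrib]
    have hA : ∑ x ∈ range (L+1), ∑ y ∈ range (M+1),
        ((L.choose x * M.choose y : ℕ) : ℚ) • f ((x+y)+1)
        = ∑ k ∈ range (L+M+1), (((L+M).choose k : ℕ) : ℚ) • f (k+1) :=
      ih M (fun k => f (k+1))
    have hB : (∑ x ∈ range (L+1), ∑ y ∈ range (M+1),
        ((L.choose (x+1) * M.choose y : ℕ) : ℚ) • f ((x+1)+y))
        + ∑ y ∈ range (M+1), (((L+1).choose 0 * M.choose y : ℕ) : ℚ) • f (0+y)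
        = ∑ k ∈ range (L+M+1), (((L+M).choose k : ℕ) : ℚ) • f k := by
      have e0 : ∑ y ∈ range (M+1), (((L+1).choose 0 * M.choose y : ℕ) : ℚ) • f (0+y)
          = ∑ y ∈ range (M+1), ((L.choose 0 * M.choose y : ℕ) : ℚ) • f (0+y) := by simp
      rw [e0, ← Finset.sum_range_succ' (fun x => ∑ y ∈ range (M+1),
          ((L.choose x * M.choose y : ℕ) : ℚ) • f (x+y)) (L+1),
        Finset.sum_range_succ (fun x => ∑ y ∈ range (M+1),
          ((L.choose x * M.choose y : ℕ) : ℚ) • f (x+y)) (L+1)]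
      simp only [Nat.choose_succ_self, Nat.zero_mul, Nat.cast_zero, zero_smul,
        Finset.sum_const_zero, add_zero]
      exact ih M f
    rw [add_assoc, hA, hB, show L+1+M = L+M+1 from by omega]
    exact pascal_sum (L+M) f


lemma block (L : ℕ) (f : ℕ → ℕ → R) :
    ∑ l ∈ range (L+1), ∑ p ∈ range (L-l+1), ∑ i ∈ range (L-l-p+1),
      ((l.factorial * p.factorial * i.factorial * (L-l-p-i).factorial : ℕ) : ℚ)⁻¹ • f (l+i) (L-p-i)
    = (L.factorial : ℚ)⁻¹ • ∑ x ∈ range (L+1), ∑ y ∈ range (L+1),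
      ((L.choose x * L.choose y : ℕ) : ℚ) • f x y := by
  have stepA : ∀ l ∈ range (L+1),
      (∑ p ∈ range (L-l+1), ∑ i ∈ range (L-l-p+1),
        ((l.factorial * p.factorial * i.factorial * (L-l-p-i).factorial : ℕ) : ℚ)⁻¹ • f (l+i) (L-p-i))
      = ∑ i ∈ range (L-l+1), ∑ j ∈ range (L-l-i+1),
        ((l.factorial * (L-l-i-j).factorial * i.factorial * j.factorial : ℕ) : ℚ)⁻¹ • f (l+i) (l+j) := by
    intro l hl
    simp only [mem_range, Nat.lt_succ_iff] at hl
    rw [tri_reflect (L-l) (fun p i =>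
      ((l.factorial * p.factorial * i.factorial * (L-l-p-i).factorial : ℕ) : ℚ)⁻¹ • f (l+i) (L-p-i))]
    refine Finset.sum_congr rfl fun i hi => Finset.sum_congr rfl fun j hj => ?_
    simp only [mem_range, Nat.lt_succ_iff] at hi hj
    have e1 : L - l - (L-l-i-j) - i = j := by omega
    have e2 : L - (L-l-i-j) - i = l + j := by omega
    rw [e1, e2]
  rw [Finset.sum_congr rfl stepA]
  rw [diag L (fun l i => ∑ j ∈ range (L-l-i+1),
      ((l.factorial * (L-l-i-j).factorial * i.factorial * j.factorial : ℕ) : ℚ)⁻¹ • f (l+i) (l+j))]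
  have stepB : ∀ x ∈ range (L+1),
      (∑ l ∈ range (x+1), ∑ j ∈ range (L-l-(x-l)+1),
        ((l.factorial * (L-l-(x-l)-j).factorial * (x-l).factorial * j.factorial : ℕ) : ℚ)⁻¹ • f (l+(x-l)) (l+j))
      = ∑ y ∈ range (L+1), ((L.factorial : ℚ)⁻¹ * ((L.choose x * L.choose y : ℕ) : ℚ)) • f x y := by
    intro x hx
    simp only [mem_range, Nat.lt_succ_iff] at hx
    have h1 : ∀ l ∈ range (x+1),
        (∑ j ∈ range (L-l-(x-l)+1),
          ((l.factorial * (L-l-(x-l)-j).factorial * (x-l).factorial * j.factorial : ℕ) : ℚ)⁻¹ • f (l+(x-l)) (l+j))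
        = ∑ j ∈ range (L-x+1),
          (((L.factorial : ℚ)⁻¹ * (L.choose x : ℚ)) •
            (((x.choose l * (L-x).choose j : ℕ) : ℚ) • f x (l+j))) := by
      intro l hl
      simp only [mem_range, Nat.lt_succ_iff] at hl
      have e3 : L - l - (x - l) = L - x := by omega
      have e4 : l + (x - l) = x := by omega
      rw [e3, e4]
      refine Finset.sum_congr rfl fun j hj => ?_
      simp only [mem_range, Nat.lt_succ_iff] at hj
      rw [weight_eq L x l j hx hl hj, smul_smul, mul_assoc]
    rw [Finset.sum_congr rfl h1]
    simp only [← Finset.smul_sum]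
    rw [vand x (L-x) (f x), Nat.add_sub_cancel' hx, Finset.smul_sum]
    refine Finset.sum_congr rfl fun y _ => ?_
    rw [smul_smul]
    congr 1
    push_cast
    ring
  rw [Finset.sum_congr rfl stepB, Finset.smul_sum]
  refine Finset.sum_congr rfl fun x _ => ?_
  rw [Finset.smul_sum]
  refine Finset.sum_congr rfl fun y _ => ?_
  rw [smul_smul]


end helpers


section reord
variable {R : Type*} [AddCommMonoid R]

lemma reorder9 (sl sm sn : Finset ℕ) (sp : ℕ → Finset ℕ) (si : ℕ → ℕ → Finset ℕ)
    (sq : ℕ → Finset ℕ) (sj : ℕ → ℕ → Finset ℕ)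
    (su : ℕ → Finset ℕ) (sk : ℕ → ℕ → Finset ℕ)
    (T : ℕ → ℕ → ℕ → ℕ → ℕ → ℕ → ℕ → ℕ → ℕ → R) :
    ∑ l ∈ sl, ∑ m ∈ sm, ∑ n ∈ sn, ∑ p ∈ sp l, ∑ i ∈ si l p,
      ∑ q ∈ sq m, ∑ j ∈ sj m q, ∑ u ∈ su n, ∑ k ∈ sk n u, T l m n p i q j u k
    = ∑ l ∈ sl, ∑ p ∈ sp l, ∑ i ∈ si l p, ∑ m ∈ sm, ∑ q ∈ sq m, ∑ j ∈ sj m q,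
      ∑ n ∈ sn, ∑ u ∈ su n, ∑ k ∈ sk n u, T l m n p i q j u k := by
  conv_lhs => enter [2, l, 2, m]; rw [Finset.sum_comm]
  conv_lhs => enter [2, l, 2, m, 2, p]; rw [Finset.sum_comm]
  conv_lhs => enter [2, l]; rw [Finset.sum_comm]
  conv_lhs => enter [2, l, 2, p]; rw [Finset.sum_comm]
  conv_lhs => enter [2, l, 2, p, 2, i, 2, m]; rw [Finset.sum_comm]
  conv_lhs => enter [2, l, 2, p, 2, i, 2, m, 2, q]; rw [Finset.sum_comm]

end reord


noncomputable def Gf {R : Type*} [CommRing R] (a b c r s t : R)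
    (L M N x1 y1 x2 z1 y2 z2 : ℕ) : R :=
  rf a (x1+x2) * rf b (y1+y2) * rf c (z1+z2) *
    r^(L+M-(x1+x2)) * s^(L+N-(y1+y2)) * t^(M+N-(z1+z2))

lemma pointwise {R : Type*} [CommRing R] [Algebra ℚ R] (a b c r s t : R)
    (L M N l m n p i1 q j1 u k1 : ℕ)
    (hl : l ≤ L) (hp : p ≤ L - l) (hi1 : i1 ≤ L - l - p)
    (hm : m ≤ M) (hq : q ≤ M - m) (hj1 : j1 ≤ M - m - q)
    (hn : n ≤ N) (hu : u ≤ N - n) (hk1 : k1 ≤ N - n - u) :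
    (((l.factorial * m.factorial * n.factorial : ℕ) : ℚ)⁻¹ •
        (rf a (l + m) * rf b (l + n) * rf c (m + n))) *
      ((p.factorial : ℚ)⁻¹ • (r * s) ^ p) *
      ((q.factorial : ℚ)⁻¹ • (r * t) ^ q) *
      ((u.factorial : ℚ)⁻¹ • (s * t) ^ u) *
      (((i1.factorial * j1.factorial : ℕ) : ℚ)⁻¹ •
        (rf (a + (l : R) + (m : R)) (i1 + j1) * s ^ i1 * t ^ j1)) *
      ((((L - l - p - i1).factorial * k1.factorial : ℕ) : ℚ)⁻¹ •
        (rf (b + (l : R) + (n : R)) ((L - l - p - i1) + k1) * r ^ (L - l - p - i1) * t ^ k1)) *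
      ((((M - m - q - j1).factorial * (N - n - u - k1).factorial : ℕ) : ℚ)⁻¹ •
        (rf (c + (m : R) + (n : R)) ((M - m - q - j1) + (N - n - u - k1)) *
          r ^ (M - m - q - j1) * s ^ (N - n - u - k1)))
    = ((l.factorial * p.factorial * i1.factorial * (L-l-p-i1).factorial : ℕ) : ℚ)⁻¹ •
      (((m.factorial * q.factorial * j1.factorial * (M-m-q-j1).factorial : ℕ) : ℚ)⁻¹ •
        (((n.factorial * u.factorial * k1.factorial * (N-n-u-k1).factorial : ℕ) : ℚ)⁻¹ •
          Gf a b c r s t L M N (l+i1) (L-p-i1) (m+j1) (M-q-j1) (n+k1) (N-u-k1))) := by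
  have ha : rf a ((l+i1)+(m+j1)) = rf a (l+m) * rf (a + (l:R) + (m:R)) (i1+j1) := by
    rw [show a + (l:R) + (m:R) = a + (((l+m : ℕ)) : R) by push_cast; ring, rf_rf,
      show (l+m)+(i1+j1) = (l+i1)+(m+j1) from by omega]
  have hb : rf b ((L-p-i1)+(n+k1))
      = rf b (l+n) * rf (b + (l:R) + (n:R)) ((L-l-p-i1)+k1) := by
    rw [show b + (l:R) + (n:R) = b + (((l+n : ℕ)) : R) by push_cast; ring, rf_rf,
      show (l+n)+((L-l-p-i1)+k1) = (L-p-i1)+(n+k1) from by omega]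
  have hc : rf c ((M-q-j1)+(N-u-k1))
      = rf c (m+n) * rf (c + (m:R) + (n:R)) ((M-m-q-j1)+(N-n-u-k1)) := by
    rw [show c + (m:R) + (n:R) = c + (((m+n : ℕ)) : R) by push_cast; ring, rf_rf,
      show (m+n)+((M-m-q-j1)+(N-n-u-k1)) = (M-q-j1)+(N-u-k1) from by omega]
  simp only [Gf]
  rw [show L+M-((l+i1)+(m+j1)) = p+q+(L-l-p-i1)+(M-m-q-j1) from by omega,
      show L+N-((L-p-i1)+(n+k1)) = p+u+i1+(N-n-u-k1) from by omega,
      show M+N-((M-q-j1)+(N-u-k1)) = q+u+j1+k1 from by omega,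
      ha, hb, hc]
  simp only [smul_mul_assoc, mul_smul_comm, smul_smul]
  congr 1
  · push_cast [mul_inv]; ring
  · ring


noncomputable def innerN {R : Type*} [CommRing R] [Algebra ℚ R] (a b c r s t : R)
    (L M N x1 y1 x2 z1 : ℕ) : R :=
  ∑ n ∈ Finset.range (N+1), ∑ u ∈ Finset.range (N-n+1), ∑ k1 ∈ Finset.range (N-n-u+1),
    ((n.factorial * u.factorial * k1.factorial * (N-n-u-k1).factorial : ℕ) : ℚ)⁻¹ •
      Gf a b c r s t L M N x1 y1 x2 z1 (n+k1) (N-u-k1)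

noncomputable def innerM {R : Type*} [CommRing R] [Algebra ℚ R] (a b c r s t : R)
    (L M N x1 y1 : ℕ) : R :=
  ∑ m ∈ Finset.range (M+1), ∑ q ∈ Finset.range (M-m+1), ∑ j1 ∈ Finset.range (M-m-q+1),
    ((m.factorial * q.factorial * j1.factorial * (M-m-q-j1).factorial : ℕ) : ℚ)⁻¹ •
      innerN a b c r s t L M N x1 y1 (m+j1) (M-q-j1)


/-- Trilinear (k=3) coefficient identity: for all `L, M, N`, the coefficient of
`x^L y^M z^N/(L! M! N!)` of `∑_{l,m,n} C_{l+m}(a,r) C_{l+n}(b,s) C_{m+n}(c,t)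
x^l y^m z^n/(l! m! n!)` equals `C_{L+M}(a,r) C_{L+N}(b,s) C_{M+N}(c,t)`, and this
equals `L! M! N!` times the coefficient of `x^L y^M z^N` of
`e^{rsx+rty+stz} ∑_{l,m,n} (a)_{l+m} (b)_{l+n} (c)_{m+n} x^l y^m z^n
/(l! m! n! (1-sx-ty)^{l+m+a} (1-rx-tz)^{l+n+b} (1-ry-sz)^{m+n+c})`,
expanded via `e^w = ∑ w^p/p!` and `(1-w)^{-u} = ∑ (u)_d w^d/d!`. -/
theorem stmt18 {R : Type*} [CommRing R] [Algebra ℚ R] (a b c r s t : R) :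
    ∀ L M N : ℕ,
      Ch a r (L + M) * Ch b s (L + N) * Ch c t (M + N) =
        ((L.factorial * M.factorial * N.factorial : ℕ) : ℚ) •
          ∑ l ∈ Finset.range (L + 1), ∑ m ∈ Finset.range (M + 1),
            ∑ n ∈ Finset.range (N + 1),
              ∑ p ∈ Finset.range (L - l + 1),
                ∑ i1 ∈ Finset.range (L - l - p + 1),
                  ∑ q ∈ Finset.range (M - m + 1),
                    ∑ j1 ∈ Finset.range (M - m - q + 1),
                      ∑ u ∈ Finset.range (N - n + 1),
                        ∑ k1 ∈ Finset.range (N - n - u + 1),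
                          (((l.factorial * m.factorial * n.factorial : ℕ) : ℚ)⁻¹ •
                              (rf a (l + m) * rf b (l + n) * rf c (m + n))) *
                            ((p.factorial : ℚ)⁻¹ • (r * s) ^ p) *
                            ((q.factorial : ℚ)⁻¹ • (r * t) ^ q) *
                            ((u.factorial : ℚ)⁻¹ • (s * t) ^ u) *
                            (((i1.factorial * j1.factorial : ℕ) : ℚ)⁻¹ •
                              (rf (a + (l : R) + (m : R)) (i1 + j1) *
                                s ^ i1 * t ^ j1)) *
                            ((((L - l - p - i1).factorial * k1.factorial : ℕ) : ℚ)⁻¹ •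
                              (rf (b + (l : R) + (n : R)) ((L - l - p - i1) + k1) *
                                r ^ (L - l - p - i1) * t ^ k1)) *
                            ((((M - m - q - j1).factorial *
                                (N - n - u - k1).factorial : ℕ) : ℚ)⁻¹ •
                              (rf (c + (m : R) + (n : R))
                                  ((M - m - q - j1) + (N - n - u - k1)) *
                                r ^ (M - m - q - j1) * s ^ (N - n - u - k1))) := by
  intro L M N
  have hL0 : (L.factorial : ℚ) ≠ 0 := Nat.cast_ne_zero.mpr (Nat.factorial_ne_zero L)
  have hM0 : (M.factorial : ℚ) ≠ 0 := Nat.cast_ne_zero.mpr (Nat.factorial_ne_zero M)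
  have hN0 : (N.factorial : ℚ) ≠ 0 := Nat.cast_ne_zero.mpr (Nat.factorial_ne_zero N)
  have e1 : (∑ l ∈ Finset.range (L + 1), ∑ m ∈ Finset.range (M + 1),
            ∑ n ∈ Finset.range (N + 1),
              ∑ p ∈ Finset.range (L - l + 1),
                ∑ i1 ∈ Finset.range (L - l - p + 1),
                  ∑ q ∈ Finset.range (M - m + 1),
                    ∑ j1 ∈ Finset.range (M - m - q + 1),
                      ∑ u ∈ Finset.range (N - n + 1),
                        ∑ k1 ∈ Finset.range (N - n - u + 1),
                          (((l.factorial * m.factorial * n.factorial : ℕ) : ℚ)⁻¹ •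
                              (rf a (l + m) * rf b (l + n) * rf c (m + n))) *
                            ((p.factorial : ℚ)⁻¹ • (r * s) ^ p) *
                            ((q.factorial : ℚ)⁻¹ • (r * t) ^ q) *
                            ((u.factorial : ℚ)⁻¹ • (s * t) ^ u) *
                            (((i1.factorial * j1.factorial : ℕ) : ℚ)⁻¹ •
                              (rf (a + (l : R) + (m : R)) (i1 + j1) *
                                s ^ i1 * t ^ j1)) *
                            ((((L - l - p - i1).factorial * k1.factorial : ℕ) : ℚ)⁻¹ •
                              (rf (b + (l : R) + (n : R)) ((L - l - p - i1) + k1) *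
                                r ^ (L - l - p - i1) * t ^ k1)) *
                            ((((M - m - q - j1).factorial *
                                (N - n - u - k1).factorial : ℕ) : ℚ)⁻¹ •
                              (rf (c + (m : R) + (n : R))
                                  ((M - m - q - j1) + (N - n - u - k1)) *
                                r ^ (M - m - q - j1) * s ^ (N - n - u - k1))))
      = ∑ l ∈ Finset.range (L + 1), ∑ p ∈ Finset.range (L - l + 1),
            ∑ i1 ∈ Finset.range (L - l - p + 1),
              ∑ m ∈ Finset.range (M + 1),
                ∑ q ∈ Finset.range (M - m + 1),
                  ∑ j1 ∈ Finset.range (M - m - q + 1),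
                    ∑ n ∈ Finset.range (N + 1),
                      ∑ u ∈ Finset.range (N - n + 1),
                        ∑ k1 ∈ Finset.range (N - n - u + 1),
                          (((l.factorial * m.factorial * n.factorial : ℕ) : ℚ)⁻¹ •
                              (rf a (l + m) * rf b (l + n) * rf c (m + n))) *
                            ((p.factorial : ℚ)⁻¹ • (r * s) ^ p) *
                            ((q.factorial : ℚ)⁻¹ • (r * t) ^ q) *
                            ((u.factorial : ℚ)⁻¹ • (s * t) ^ u) *
                            (((i1.factorial * j1.factorial : ℕ) : ℚ)⁻¹ •
                              (rf (a + (l : R) + (m : R)) (i1 + j1) *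
                                s ^ i1 * t ^ j1)) *
                            ((((L - l - p - i1).factorial * k1.factorial : ℕ) : ℚ)⁻¹ •
                              (rf (b + (l : R) + (n : R)) ((L - l - p - i1) + k1) *
                                r ^ (L - l - p - i1) * t ^ k1)) *
                            ((((M - m - q - j1).factorial *
                                (N - n - u - k1).factorial : ℕ) : ℚ)⁻¹ •
                              (rf (c + (m : R) + (n : R))
                                  ((M - m - q - j1) + (N - n - u - k1)) *
                                r ^ (M - m - q - j1) * s ^ (N - n - u - k1))) := by
    exact reorder9 _ _ _ _ _ _ _ _ _ _
  have e2 : (∑ l ∈ Finset.range (L + 1), ∑ p ∈ Finset.range (L - l + 1),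
            ∑ i1 ∈ Finset.range (L - l - p + 1),
              ∑ m ∈ Finset.range (M + 1),
                ∑ q ∈ Finset.range (M - m + 1),
                  ∑ j1 ∈ Finset.range (M - m - q + 1),
                    ∑ n ∈ Finset.range (N + 1),
                      ∑ u ∈ Finset.range (N - n + 1),
                        ∑ k1 ∈ Finset.range (N - n - u + 1),
                          (((l.factorial * m.factorial * n.factorial : ℕ) : ℚ)⁻¹ •
                              (rf a (l + m) * rf b (l + n) * rf c (m + n))) *
                            ((p.factorial : ℚ)⁻¹ • (r * s) ^ p) *
                            ((q.factorial : ℚ)⁻¹ • (r * t) ^ q) *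
                            ((u.factorial : ℚ)⁻¹ • (s * t) ^ u) *
                            (((i1.factorial * j1.factorial : ℕ) : ℚ)⁻¹ •
                              (rf (a + (l : R) + (m : R)) (i1 + j1) *
                                s ^ i1 * t ^ j1)) *
                            ((((L - l - p - i1).factorial * k1.factorial : ℕ) : ℚ)⁻¹ •
                              (rf (b + (l : R) + (n : R)) ((L - l - p - i1) + k1) *
                                r ^ (L - l - p - i1) * t ^ k1)) *
                            ((((M - m - q - j1).factorial *
                                (N - n - u - k1).factorial : ℕ) : ℚ)⁻¹ •
                              (rf (c + (m : R) + (n : R))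
                                  ((M - m - q - j1) + (N - n - u - k1)) *
                                r ^ (M - m - q - j1) * s ^ (N - n - u - k1))))
      = ∑ l ∈ Finset.range (L + 1), ∑ p ∈ Finset.range (L - l + 1),
          ∑ i1 ∈ Finset.range (L - l - p + 1),
            ((l.factorial * p.factorial * i1.factorial * (L-l-p-i1).factorial : ℕ) : ℚ)⁻¹ •
              innerM a b c r s t L M N (l+i1) (L-p-i1) := by
    refine Finset.sum_congr rfl fun l hl => Finset.sum_congr rfl fun p hp =>
      Finset.sum_congr rfl fun i1 hi1 => ?_
    simp only [mem_range, Nat.lt_succ_iff] at hl hp hi1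
    trans (∑ m ∈ Finset.range (M + 1), ∑ q ∈ Finset.range (M - m + 1),
      ∑ j1 ∈ Finset.range (M - m - q + 1), ∑ n ∈ Finset.range (N + 1),
      ∑ u ∈ Finset.range (N - n + 1), ∑ k1 ∈ Finset.range (N - n - u + 1),
      ((l.factorial * p.factorial * i1.factorial * (L-l-p-i1).factorial : ℕ) : ℚ)⁻¹ •
        (((m.factorial * q.factorial * j1.factorial * (M-m-q-j1).factorial : ℕ) : ℚ)⁻¹ •
          (((n.factorial * u.factorial * k1.factorial * (N-n-u-k1).factorial : ℕ) : ℚ)⁻¹ •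
            Gf a b c r s t L M N (l+i1) (L-p-i1) (m+j1) (M-q-j1) (n+k1) (N-u-k1))))
    · refine Finset.sum_congr rfl fun m hm => Finset.sum_congr rfl fun q hq =>
        Finset.sum_congr rfl fun j1 hj1 => Finset.sum_congr rfl fun n hn =>
        Finset.sum_congr rfl fun u hu => Finset.sum_congr rfl fun k1 hk1 => ?_
      simp only [mem_range, Nat.lt_succ_iff] at hm hq hj1 hn hu hk1
      exact pointwise a b c r s t L M N l m n p i1 q j1 u k1 hl hp hi1 hm hq hj1 hn hu hk1
    · simp only [innerM, innerN, Finset.smul_sum]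
  rw [e1, e2, block L (innerM a b c r s t L M N)]
  have e4 : ∀ x1 y1 : ℕ, innerM a b c r s t L M N x1 y1
      = (M.factorial : ℚ)⁻¹ • ∑ x2 ∈ Finset.range (M+1), ∑ z1 ∈ Finset.range (M+1),
          ((M.choose x2 * M.choose z1 : ℕ) : ℚ) • innerN a b c r s t L M N x1 y1 x2 z1 :=
    fun x1 y1 => block M (innerN a b c r s t L M N x1 y1)
  have e5 : ∀ x1 y1 x2 z1 : ℕ, innerN a b c r s t L M N x1 y1 x2 z1
      = (N.factorial : ℚ)⁻¹ • ∑ y2 ∈ Finset.range (N+1), ∑ z2 ∈ Finset.range (N+1),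
          ((N.choose y2 * N.choose z2 : ℕ) : ℚ) • Gf a b c r s t L M N x1 y1 x2 z1 y2 z2 :=
    fun x1 y1 x2 z1 => block N (Gf a b c r s t L M N x1 y1 x2 z1)
  simp only [e4, e5]
  have chA : Ch a r (L+M) = ∑ x1 ∈ Finset.range (L+1), ∑ x2 ∈ Finset.range (M+1),
      ((L.choose x1 * M.choose x2 : ℕ) : ℚ) • (rf a (x1+x2) * r^(L+M-(x1+x2))) := by
    refine Eq.trans ?_ (vand L M (fun k => rf a k * r^(L+M-k))).symm
    unfold Ch
    refine Finset.sum_congr rfl fun k _ => ?_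
    rw [natq_smul, ← mul_assoc]
  have chB : Ch b s (L+N) = ∑ y1 ∈ Finset.range (L+1), ∑ y2 ∈ Finset.range (N+1),
      ((L.choose y1 * N.choose y2 : ℕ) : ℚ) • (rf b (y1+y2) * s^(L+N-(y1+y2))) := by
    refine Eq.trans ?_ (vand L N (fun k => rf b k * s^(L+N-k))).symm
    unfold Ch
    refine Finset.sum_congr rfl fun k _ => ?_
    rw [natq_smul, ← mul_assoc]
  have chC : Ch c t (M+N) = ∑ z1 ∈ Finset.range (M+1), ∑ z2 ∈ Finset.range (N+1),
      ((M.choose z1 * N.choose z2 : ℕ) : ℚ) • (rf c (z1+z2) * t^(M+N-(z1+z2))) := by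
    refine Eq.trans ?_ (vand M N (fun k => rf c k * t^(M+N-k))).symm
    unfold Ch
    refine Finset.sum_congr rfl fun k _ => ?_
    rw [natq_smul, ← mul_assoc]
  rw [chA, chB, chC]
  simp only [Finset.sum_mul, Finset.mul_sum, Finset.smul_sum, smul_mul_assoc,
    mul_smul_comm, smul_smul]
  conv_lhs => enter [2, v0]; enter [2, v1]; enter [2, v2]; rw [Finset.sum_comm]
  conv_lhs => enter [2, v0]; enter [2, v1]; rw [Finset.sum_comm]
  conv_lhs => enter [2, v0]; rw [Finset.sum_comm]
  conv_lhs => rw [Finset.sum_comm]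
  conv_lhs => enter [2, v0]; enter [2, v1]; rw [Finset.sum_comm]
  conv_lhs => enter [2, v0]; rw [Finset.sum_comm]
  conv_lhs => enter [2, v0]; enter [2, v1]; enter [2, v2]; enter [2, v3]; rw [Finset.sum_comm]
  conv_lhs => enter [2, v0]; enter [2, v1]; enter [2, v2]; rw [Finset.sum_comm]
  conv_lhs => enter [2, v0]; enter [2, v1]; rw [Finset.sum_comm]
  conv_lhs => enter [2, v0]; enter [2, v1]; enter [2, v2]; enter [2, v3]; rw [Finset.sum_comm]
  refine Finset.sum_congr rfl fun x1 _ => Finset.sum_congr rfl fun y1 _ =>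
    Finset.sum_congr rfl fun x2 _ => Finset.sum_congr rfl fun z1 _ =>
    Finset.sum_congr rfl fun y2 _ => Finset.sum_congr rfl fun z2 _ => ?_
  simp only [Gf]
  congr 1
  · push_cast
    field_simp
  · ring
end
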